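/- The function f(x,y) = x·(y/(y-1))^R/(1 - e^{-x}y^R), over the region y > 1, x > 0, e^{-x}y^R < 1, when evaluated at y = R log R + 1 and x = R log y + 2 log R with R ≥ 6, satisfies f(x,y) ≤ e^{(1.8 + log log R)/log R}·R·log R. -/

import Mathlib

set_option maxHeartbeats 1000000

private lemma keyPoly (R L : ℝ) (hR : 6 ≤ R) (h1 : 1.75 ≤ L) (h2 : L ≤ R/9 + 1.25) :
    L + 2.46 * L^3 ≤ 0.8*R*L^2 + 0.24*R*L + 0.032*R := by
  nlinarith [mul_nonneg (sub_nonneg.2 h1) (sub_nonneg.2 h2), sq_nonneg (L - 1.75),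
    mul_nonneg (mul_nonneg (sub_nonneg.2 h1) (sub_nonneg.2 h2)) (by linarith : (0:ℝ) ≤ L),
    mul_nonneg (sub_nonneg.2 hR) (sq_nonneg L), mul_nonneg (sub_nonneg.2 hR) (by linarith : (0:ℝ) ≤ L),
    mul_nonneg (mul_nonneg (sub_nonneg.2 hR) (by linarith : (0:ℝ) ≤ L)) (sub_nonneg.2 h2)]

/-- evaluating `f(x,y) = x (y/(y-1))^R / (1 - e^{-x} y^R)` at
`y = R log R + 1`, `x = R log y + 2 log R` for an integer `R ≥ 6`. -/
theorem f_eval_bound (R : ℕ) (hR : 6 ≤ R) (y x : ℝ)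
    (hy : y = (R : ℝ) * Real.log R + 1)
    (hx : x = (R : ℝ) * Real.log y + 2 * Real.log R) :
    x * (y / (y - 1)) ^ R / (1 - Real.exp (-x) * y ^ R)
      ≤ Real.exp ((1.8 + Real.log (Real.log R)) / Real.log R) * R * Real.log R := by
  have hR6 : (6:ℝ) ≤ (R:ℝ) := by exact_mod_cast hR
  have hRpos : (0:ℝ) < (R:ℝ) := by linarith
  set L : ℝ := Real.log R with hLdef
  have he9 : Real.exp 1 < 2.7182818286 := Real.exp_one_lt_d9
  have he9' : (2.7182818283:ℝ) < Real.exp 1 := Real.exp_one_gt_d9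
  have hq : (1.25:ℝ) ≤ Real.exp 0.25 := by
    have := Real.add_one_le_exp (0.25:ℝ); linarith
  have hexp175 : Real.exp 1.75 < 6 := by
    have h1 : Real.exp 1.75 * Real.exp 0.25 = Real.exp 1 * Real.exp 1 := by
      rw [← Real.exp_add, ← Real.exp_add]; norm_num
    nlinarith [Real.exp_pos (1.75:ℝ), Real.exp_pos (0.25:ℝ)]
  have hL1 : (1.75:ℝ) ≤ L := by
    rw [hLdef, Real.le_log_iff_exp_le hRpos]; linarith
  have hlog9 : Real.log 9 ≤ 2.25 := by
    rw [Real.log_le_iff_le_exp (by norm_num)]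
    have h1 : Real.exp 2.25 = Real.exp 1 * Real.exp 1 * Real.exp 0.25 := by
      rw [← Real.exp_add, ← Real.exp_add]; norm_num
    nlinarith
  have hL2 : L ≤ (R:ℝ)/9 + 1.25 := by
    have h := Real.log_le_sub_one_of_pos (show (0:ℝ) < (R:ℝ)/9 by linarith)
    rw [Real.log_div (by positivity) (by norm_num)] at h
    linarith
  have hLpos : (0:ℝ) < L := by linarith
  set g : ℝ := Real.log L with hgdef
  have hg0 : 0 ≤ g := Real.log_nonneg (by linarith)
  have hgle : g ≤ L - 1 := Real.log_le_sub_one_of_pos hLpos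
  set t : ℝ := (0.8 + g)/L with htdef
  have htL : t * L = 0.8 + g := by rw [htdef]; exact div_mul_cancel₀ _ hLpos.ne'
  have ht0 : 0 < t := by
    rw [htdef]; positivity
  have ht1 : t ≤ 1 := by rw [htdef, div_le_one hLpos]; linarith
  have hexpt_ub : Real.exp t ≤ 2.7182818286 :=
    le_of_lt (lt_of_le_of_lt (Real.exp_le_exp.2 ht1) he9)
  have hexpt_lb : 1 + t + 3/8*t^2 + 1/16*t^3 ≤ Real.exp t := by
    have h4 : (1 + t/4)^4 ≤ Real.exp t := by
      have h := Real.add_one_le_exp (t/4)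
      have h2 : (1 + t/4)^4 ≤ (Real.exp (t/4))^4 := by
        apply pow_le_pow_left₀ (by positivity) (by linarith)
      have h3 : (Real.exp (t/4))^4 = Real.exp t := by
        rw [← Real.exp_nat_mul]
        congr 1
        push_cast
        ring
      linarith
    nlinarith [pow_nonneg ht0.le 4]
  -- geometry of y
  have hRL : (0:ℝ) < (R:ℝ)*L := by positivity
  have hy1 : y - 1 = (R:ℝ) * L := by rw [hy]; ring
  have hy0 : (0:ℝ) < y := by rw [hy]; linarith [hRL]
  have hygt1 : (1:ℝ) < y := by rw [hy]; linarith [hRL]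
  -- bound on x
  have hlogy : Real.log y ≤ L + g + 1/((R:ℝ)*L) := by
    have hy' : y = ((R:ℝ)*L) * (1 + 1/((R:ℝ)*L)) := by
      rw [hy]; field_simp
    have h1 : Real.log y = Real.log ((R:ℝ)*L) + Real.log (1 + 1/((R:ℝ)*L)) := by
      rw [hy', Real.log_mul (by positivity) (by positivity)]
    have h2 : Real.log ((R:ℝ)*L) = L + g := by
      rw [Real.log_mul (by positivity) (by positivity), hLdef, hgdef]
    have h3 : Real.log (1 + 1/((R:ℝ)*L)) ≤ 1/((R:ℝ)*L) := by
      have := Real.log_le_sub_one_of_pos (show (0:ℝ) < 1 + 1/((R:ℝ)*L) by positivity)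
      linarith
    rw [h1, h2]; linarith
  have hxle : x ≤ (R:ℝ)*L + (R:ℝ)*g + 1/L + 2*L := by
    rw [hx]
    have h1 : (R:ℝ) * Real.log y ≤ (R:ℝ)*(L + g + 1/((R:ℝ)*L)) :=
      mul_le_mul_of_nonneg_left hlogy hRpos.le
    have h2 : (R:ℝ)*(L + g + 1/((R:ℝ)*L)) = (R:ℝ)*L + (R:ℝ)*g + 1/L := by
      field_simp
    rw [h2] at h1; linarith
  have hx0 : 0 ≤ x := by
    rw [hx]
    have : 0 ≤ Real.log y := Real.log_nonneg hygt1.le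
    nlinarith
  -- denominator
  have hden : Real.exp (-x) * y ^ R = 1/(R:ℝ)^2 := by
    have hyR : Real.exp ((R:ℝ) * Real.log y) = y ^ R := by
      rw [Real.exp_nat_mul, Real.exp_log hy0]
    have hR2 : Real.exp (2 * L) = (R:ℝ)^2 := by
      rw [show (2:ℝ) * L = L + L by ring, Real.exp_add, hLdef, Real.exp_log hRpos]; ring
    rw [hx, neg_add, Real.exp_add, Real.exp_neg, Real.exp_neg, hyR, hR2]
    field_simp
  have hD : (0:ℝ) < 1 - 1/(R:ℝ)^2 := by
    have : 1/(R:ℝ)^2 ≤ 1/36 := by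
      apply div_le_div_of_nonneg_left (by norm_num) (by norm_num) ?_ <;> nlinarith
    linarith
  -- power bound
  have hpowb : (y / (y - 1)) ^ R ≤ Real.exp (1/L) := by
    have hq1 : y / (y-1) = 1 + 1/((R:ℝ)*L) := by
      rw [hy1, hy]; field_simp
    have h1 : 1 + 1/((R:ℝ)*L) ≤ Real.exp (1/((R:ℝ)*L)) := by
      have := Real.add_one_le_exp (1/((R:ℝ)*L)); linarith
    have h2 : (y/(y-1))^R ≤ (Real.exp (1/((R:ℝ)*L)))^R := by
      rw [hq1]; exact pow_le_pow_left₀ (by positivity) h1 R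
    have h3 : (Real.exp (1/((R:ℝ)*L)))^R = Real.exp (1/L) := by
      rw [← Real.exp_nat_mul]
      congr 1
      field_simp
    linarith
  -- main numeric inequality
  have key : L + 2.46*L^3 ≤ 0.8*(R:ℝ)*L^2 + 0.24*(R:ℝ)*L + 0.032*(R:ℝ) :=
    keyPoly _ _ hR6 hL1 hL2
  have hdiv : 1/L + 2*L + 2.7182818286*L/(R:ℝ) ≤ 0.8*(R:ℝ) + 0.24*(R:ℝ)/L + 0.032*(R:ℝ)/L^2 := by
    have hLR : 2.7182818286*L/(R:ℝ) ≤ 0.46*L := by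
      rw [div_le_iff₀ hRpos]; nlinarith
    have h2' : (L + 2.46*L^3)/L^2 ≤ (0.8*(R:ℝ)*L^2 + 0.24*(R:ℝ)*L + 0.032*(R:ℝ))/L^2 := by
      gcongr
    have e1 : (L + 2.46*L^3)/L^2 = 1/L + 2.46*L := by field_simp
    have e2 : (0.8*(R:ℝ)*L^2 + 0.24*(R:ℝ)*L + 0.032*(R:ℝ))/L^2
        = 0.8*(R:ℝ) + 0.24*(R:ℝ)/L + 0.032*(R:ℝ)/L^2 := by field_simp
    rw [e1, e2] at h2'
    linarith
  have hmain : (R:ℝ)*L + (R:ℝ)*g + 1/L + 2*L ≤ (1 - 1/(R:ℝ)^2) * Real.exp t * ((R:ℝ)*L) := by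
    have ht2 : 0.24*(R:ℝ)/L ≤ 3/8*t^2*((R:ℝ)*L) := by
      have hs : t^2 * L = (0.8+g)^2 / L := by rw [htdef]; field_simp
      rw [show 3/8*t^2*((R:ℝ)*L) = 3/8*(R:ℝ)*(t^2*L) by ring, hs,
        show 3/8*(R:ℝ)*((0.8+g)^2/L) = (3/8*(R:ℝ)*(0.8+g)^2)/L by ring]
      rw [div_le_div_iff₀ hLpos hLpos]
      nlinarith [mul_nonneg (mul_nonneg hRpos.le hg0) hLpos.le,
        mul_nonneg (mul_nonneg (mul_nonneg hRpos.le hg0) hg0) hLpos.le]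
    have ht3 : 0.032*(R:ℝ)/L^2 ≤ 1/16*t^3*((R:ℝ)*L) := by
      have hs : t^3 * L = (0.8+g)^3 / L^2 := by rw [htdef]; field_simp
      rw [show 1/16*t^3*((R:ℝ)*L) = 1/16*(R:ℝ)*(t^3*L) by ring, hs,
        show 1/16*(R:ℝ)*((0.8+g)^3/L^2) = (1/16*(R:ℝ)*(0.8+g)^3)/L^2 by ring]
      rw [div_le_div_iff₀ (by positivity) (by positivity : (0:ℝ) < L^2)]
      nlinarith [mul_nonneg (mul_nonneg hRpos.le hg0) (sq_nonneg L),
        mul_nonneg (mul_nonneg (mul_nonneg hRpos.le hg0) hg0) (sq_nonneg L),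
        mul_nonneg (mul_nonneg (mul_nonneg (mul_nonneg hRpos.le hg0) hg0) hg0) (sq_nonneg L)]
    have hE : (1 - 1/(R:ℝ)^2) * Real.exp t * ((R:ℝ)*L)
        = Real.exp t * ((R:ℝ)*L) - Real.exp t * (L/(R:ℝ)) := by
      field_simp
    have hE2 : Real.exp t * (L/(R:ℝ)) ≤ 2.7182818286 * L/(R:ℝ) := by
      rw [show (2.7182818286:ℝ) * L/(R:ℝ) = 2.7182818286 * (L/(R:ℝ)) by ring]
      exact mul_le_mul_of_nonneg_right hexpt_ub (by positivity)
    have hE3 : (1 + t + 3/8*t^2 + 1/16*t^3)*((R:ℝ)*L) ≤ Real.exp t * ((R:ℝ)*L) :=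
      mul_le_mul_of_nonneg_right hexpt_lb hRL.le
    have hexpand : (1 + t + 3/8*t^2 + 1/16*t^3)*((R:ℝ)*L)
        = (R:ℝ)*L + (R:ℝ)*(0.8+g) + 3/8*t^2*((R:ℝ)*L) + 1/16*t^3*((R:ℝ)*L) := by
      linear_combination (R:ℝ) * htL
    rw [hE]
    rw [hexpand] at hE3
    linarith [hdiv, hE2, hE3, ht2, ht3]
  -- assemble
  rw [hden, div_le_iff₀ hD]
  have hexpsplit : Real.exp ((1.8 + g)/L) = Real.exp t * Real.exp (1/L) := by
    rw [← Real.exp_add]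
    congr 1
    rw [htdef]; field_simp; ring
  have hA0 : 0 ≤ (R:ℝ)*L + (R:ℝ)*g + 1/L + 2*L := by positivity
  calc x * (y/(y-1))^R ≤ ((R:ℝ)*L + (R:ℝ)*g + 1/L + 2*L) * Real.exp (1/L) := by
        have hfrac : 0 ≤ y/(y-1) := div_nonneg hy0.le (by linarith [hRL])
        exact mul_le_mul hxle hpowb (pow_nonneg hfrac R) hA0
    _ ≤ ((1 - 1/(R:ℝ)^2) * Real.exp t * ((R:ℝ)*L)) * Real.exp (1/L) :=
        mul_le_mul_of_nonneg_right hmain (Real.exp_nonneg _)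
    _ = Real.exp ((1.8 + g)/L) * (R:ℝ) * L * (1 - 1/(R:ℝ)^2) := by
        rw [hexpsplit]; ring
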